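/- Let (F_n)_{n∈ℕ} be a filtration on a probability space, let (H_n)_{n∈ℕ} be a non-negative, integrable process adapted to (F_n), let ε ≥ 0, let N ∈ ℕ, and let (k_{1,r})_{r≥1} be non-negative real numbers. Assume that for every n, almost surely on the event {H_n ≥ ε} one has E[H_{n+1} − H_n | F_n] ≥ −k_{1,n+1}. Define the stopping time τ = min( inf{ t ≥ 0 : H_t ≤ ε }, N ). Then the stopped compensated process L_n := H_{n ∧ τ} + Σ_{r=1}^{n ∧ τ} k_{1,r} is a submartingale with respect to (F_n). -/

import Mathlib

open MeasureTheory

/-- Let `(H_n)` be a non-negative integrable process adapted to the filtration `(ℱ_n)`,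
`ε ≥ 0`, `N ∈ ℕ`, and `k r ≥ 0`. Assume that for every `n`, almost surely on `{H_n ≥ ε}`
one has `E[H_{n+1} - H_n | ℱ_n] ≥ -k_{n+1}`. With the stopping time
`τ = min(inf {t : H_t ≤ ε}, N)` (here realized as `sInf ({t | H_t ≤ ε} ∪ {N})`, which agrees
with the `inf ∅ = +∞` convention), the stopped compensated process
`L_n = H_{n ∧ τ} + ∑_{r=1}^{n ∧ τ} k_r` is a submartingale. -/
theorem stmt3 {Ω : Type*} {m : MeasurableSpace Ω} {μ : Measure Ω} [IsProbabilityMeasure μ]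
    {ℱ : Filtration ℕ m} {H : ℕ → Ω → ℝ}
    (hadp : Adapted ℱ H) (hint : ∀ n, Integrable (H n) μ)
    (hnn : ∀ n ω, 0 ≤ H n ω)
    {ε : ℝ} (hε : 0 ≤ ε) (N : ℕ) {k : ℕ → ℝ} (hk : ∀ r, 0 ≤ k r)
    (hdrift : ∀ n, ∀ᵐ ω ∂μ, ε ≤ H n ω →
      -(k (n + 1)) ≤ (μ[H (n + 1) - H n | ℱ n]) ω) :
    Submartingale
      (fun n ω =>
        H (min n (sInf ({t | H t ω ≤ ε} ∪ {N}))) ω +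
          ∑ r ∈ Finset.Icc 1 (min n (sInf ({t | H t ω ≤ ε} ∪ {N}))), k r)
      ℱ μ := by
  classical
  set τ : Ω → ℕ := fun ω => sInf ({t | H t ω ≤ ε} ∪ {N}) with hτdef
  have hτ_le : ∀ ω, τ ω ≤ N := fun ω => Nat.sInf_le (Or.inr rfl)
  -- τ is a stopping time
  have hτ : IsStoppingTime ℱ (fun ω => WithTop.some (τ ω)) := by
    intro n
    simp only [WithTop.coe_le_coe]
    have hset : {ω | τ ω ≤ n} =
        {ω | N ≤ n} ∪ ⋃ t ∈ Finset.range (n + 1), {ω | H t ω ≤ ε} := by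
      ext ω
      simp only [Set.mem_setOf_eq, Set.mem_union, Set.mem_iUnion, Finset.mem_range,
        exists_prop]
      constructor
      · intro h
        have hne : ({t | H t ω ≤ ε} ∪ {N} : Set ℕ).Nonempty := ⟨N, Or.inr rfl⟩
        rcases Nat.sInf_mem hne with hm | hm
        · exact Or.inr ⟨τ ω, Nat.lt_succ_of_le h, hm⟩
        · left
          have : τ ω = N := hm
          omega
      · rintro (h | ⟨t, ht, htε⟩)
        · exact le_trans (hτ_le ω) h
        · exact le_trans (Nat.sInf_le (Or.inl htε)) (Nat.lt_succ_iff.mp ht)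
    rw [hset]
    refine MeasurableSet.union ?_ ?_
    · by_cases hN : N ≤ n
      · simp only [hN]
        simpa using MeasurableSet.univ
      · simp only [hN]
        simpa using MeasurableSet.empty
    · refine MeasurableSet.biUnion (Finset.range (n + 1)).countable_toSet fun t ht => ?_
      have htn : t ≤ n := Nat.lt_succ_iff.mp (Finset.mem_range.mp ht)
      exact ℱ.mono htn _ (hadp t measurableSet_Iic)
  -- the stopped times
  set σ : ℕ → Ω → ℕ := fun n ω => min n (τ ω) with hσdef
  have hσ : ∀ n, IsStoppingTime ℱ (fun ω => WithTop.some (σ n ω)) := fun n => by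
    have e : ∀ ω, WithTop.some (σ n ω) = min (WithTop.some n) (WithTop.some (τ ω)) := fun ω => by
      rcases le_total n (τ ω) with h | h
      · rw [min_eq_left (WithTop.coe_le_coe.mpr h)]; exact congrArg _ (min_eq_left h)
      · rw [min_eq_right (WithTop.coe_le_coe.mpr h)]; exact congrArg _ (min_eq_right h)
    simp only [e]; exact (isStoppingTime_const ℱ n).min hτ
  have hσ_le : ∀ n ω, σ n ω ≤ n := fun n ω => min_le_left _ _
  -- the compensator
  set g : ℕ → ℝ := fun j => ∑ r ∈ Finset.Icc 1 j, k r with hgdef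
  set L : ℕ → Ω → ℝ := fun n ω => H (σ n ω) ω + g (σ n ω) with hLdef
  have hσmeas : ∀ n, Measurable[ℱ n] (σ n) := fun n =>
    by exact ((hσ n).measurable_of_le (fun ω => WithTop.coe_le_coe.mpr (hσ_le n ω))).untopA
  -- adaptedness
  have hadpL : StronglyAdapted ℱ L := by
    intro n
    have h1 : StronglyMeasurable[ℱ n] (stoppedValue H (fun ω => WithTop.some (σ n ω))) :=
      stronglyMeasurable_stoppedValue_of_le hadp.stronglyAdapted.isStronglyProgressive_of_discrete (hσ n)
        (fun ω => WithTop.coe_le_coe.mpr (hσ_le n ω))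
    have h2 : StronglyMeasurable[ℱ n] (fun ω => g (σ n ω)) :=
      ((measurable_from_top (f := g)).comp (hσmeas n)).stronglyMeasurable
    exact h1.add h2
  -- integrability
  have hintL : ∀ n, Integrable (L n) μ := by
    intro n
    have h1 : Integrable (stoppedValue H (fun ω => WithTop.some (σ n ω))) μ :=
      integrable_stoppedValue ℕ (hσ n) hint (fun ω => WithTop.coe_le_coe.mpr (hσ_le n ω))
    have h2 : Integrable (fun ω => g (σ n ω)) μ := by
      refine Integrable.mono' (integrable_const (g n)) ?_ (ae_of_all _ fun ω => ?_)
      · exact (((measurable_from_top (f := g)).comp (hσmeas n)).mono (ℱ.le n)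
          le_rfl).aestronglyMeasurable
      · have hgnn : 0 ≤ g (σ n ω) := Finset.sum_nonneg fun r _ => hk r
        have : g (σ n ω) ≤ g n := by
          refine Finset.sum_le_sum_of_subset_of_nonneg ?_ fun r _ _ => hk r
          exact Finset.Icc_subset_Icc_right (hσ_le n ω)
        rw [Real.norm_eq_abs, abs_of_nonneg hgnn]
        exact this
    exact h1.add h2
  refine submartingale_nat hadpL hintL fun n => ?_
  -- the increment
  set A : Set Ω := {ω | n < τ ω} with hAdef
  have hA : MeasurableSet[ℱ n] A := by
    have : A = {ω | τ ω ≤ n}ᶜ := by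
      ext ω; simp [hAdef, not_le]
    rw [this]
    simpa using (hτ n).compl
  set f : Ω → ℝ := fun ω => H (n + 1) ω - H n ω + k (n + 1) with hfdef
  have hf_int : Integrable f μ := ((hint (n + 1)).sub (hint n)).add (integrable_const _)
  have hdecomp : L (n + 1) = L n + A.indicator f := by
    funext ω
    by_cases h : n < τ ω
    · have h1 : σ n ω = n := min_eq_left (le_of_lt h)
      have h2 : σ (n + 1) ω = n + 1 := min_eq_left (Nat.succ_le_of_lt h)
      have hind : A.indicator f ω = f ω := Set.indicator_of_mem (show ω ∈ A from h) f
      simp only [hLdef, h1, h2, hind, Pi.add_apply]; simp only [hfdef]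
      have : g (n + 1) = g n + k (n + 1) := by
        rw [hgdef]
        exact Finset.sum_Icc_succ_top (Nat.one_le_iff_ne_zero.mpr (Nat.succ_ne_zero n)) k
      rw [this]; ring
    · have hτn : τ ω ≤ n := not_lt.mp h
      have h1 : σ n ω = τ ω := min_eq_right hτn
      have h2 : σ (n + 1) ω = τ ω := min_eq_right (le_trans hτn (Nat.le_succ n))
      have hind : A.indicator f ω = 0 := Set.indicator_of_notMem (show ω ∉ A from h) f
      simp only [hLdef, h1, h2, hind, Pi.add_apply, add_zero]
  -- conditional expectation computation
  have hcond1 : μ[L (n + 1)|ℱ n] =ᵐ[μ] L n + A.indicator (μ[f|ℱ n]) := by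
    rw [hdecomp]
    refine (condExp_add (hintL n) (hf_int.indicator (ℱ.le n _ hA)) _).trans ?_
    have hLn : μ[L n|ℱ n] = L n :=
      condExp_of_stronglyMeasurable (ℱ.le n) (hadpL n) (hintL n)
    rw [hLn]
    exact Filter.EventuallyEq.rfl.add (condExp_indicator hf_int hA)
  have hcond2 : μ[f|ℱ n] =ᵐ[μ] μ[H (n + 1) - H n|ℱ n] + fun _ => k (n + 1) := by
    refine (condExp_add ((hint (n + 1)).sub (hint n)) (integrable_const _) _).trans ?_
    exact Filter.EventuallyEq.rfl.add (by rw [condExp_const (ℱ.le n)])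
  -- on A, ε ≤ H n, hence the drift bound applies
  have hAsub : ∀ ω, ω ∈ A → ε ≤ H n ω := by
    intro ω hω
    have : n ∉ ({t | H t ω ≤ ε} ∪ {N} : Set ℕ) := Nat.notMem_of_lt_sInf hω
    have : ¬ H n ω ≤ ε := fun hc => this (Or.inl hc)
    linarith
  filter_upwards [hcond1, hcond2, hdrift n] with ω h1 h2 h3
  rw [h1]
  have hind_nonneg : 0 ≤ A.indicator (μ[f|ℱ n]) ω := by
    by_cases hω : ω ∈ A
    · rw [Set.indicator_of_mem hω]
      rw [h2]
      have := h3 (hAsub ω hω)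
      simp only [Pi.add_apply]
      linarith
    · rw [Set.indicator_of_notMem hω]
  simp only [Pi.add_apply]
  linarith
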